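/- The orbits of the group K acting naturally on G are exactly the sets {e}, Z \ {e}, and Y_i for i ∈ F_q; in particular these sets are pairwise disjoint and partition G. -/

import Mathlib

/-- The Heisenberg group `H₃(F)` of upper unitriangular 3×3 matrices over `F`,
recorded by the three free entries: `x` in position (1,2), `y` in position (2,3),
`z` in position (1,3). -/
@[ext]
structure Heis (F : Type*) where
  x : F
  y : F
  z : F
deriving DecidableEq

namespace Heis

variable {F : Type*} [Field F]

/-- Multiplication corresponding to the matrix product. -/
instance : Group (Heis F) where
  mul a b := ⟨a.x + b.x, a.y + b.y, a.z + b.z + a.x * b.y⟩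
  one := ⟨0, 0, 0⟩
  inv a := ⟨-a.x, -a.y, -a.z + a.x * a.y⟩
  mul_assoc a b c := Heis.ext
    (show a.x + b.x + c.x = a.x + (b.x + c.x) by ring)
    (show a.y + b.y + c.y = a.y + (b.y + c.y) by ring)
    (show a.z + b.z + a.x * b.y + c.z + (a.x + b.x) * c.y
        = a.z + (b.z + c.z + b.x * c.y) + a.x * (b.y + c.y) by ring)
  one_mul a := Heis.ext
    (show (0 : F) + a.x = a.x by ring)
    (show (0 : F) + a.y = a.y by ring)
    (show (0 : F) + a.z + 0 * a.y = a.z by ring)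
  mul_one a := Heis.ext
    (show a.x + 0 = a.x by ring)
    (show a.y + 0 = a.y by ring)
    (show a.z + 0 + a.x * 0 = a.z by ring)
  inv_mul_cancel a := Heis.ext
    (show -a.x + a.x = 0 by ring)
    (show -a.y + a.y = 0 by ring)
    (show -a.z + a.x * a.y + a.z + -a.x * a.y = 0 by ring)

instance [Fintype F] : Fintype (Heis F) :=
  Fintype.ofEquiv (F × F × F)
    ⟨fun p => ⟨p.1, p.2.1, p.2.2⟩, fun a => (a.x, a.y, a.z), fun _ => rfl, fun _ => rfl⟩

end Heis

/-- The element `g(x,y,z)` of the Heisenberg group. -/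
def gElt {F : Type*} (x y z : F) : Heis F := ⟨x, y, z⟩

/-- The center `Z = {g(0,0,z) : z ∈ F}` of the Heisenberg group, as a set. -/
def Zset (F : Type*) [Field F] : Set (Heis F) := {g : Heis F | g.x = 0 ∧ g.y = 0}

/-- The center `Z` as a subgroup of the Heisenberg group. -/
def Zsub (F : Type*) [Field F] : Subgroup (Heis F) where
  carrier := Zset F
  mul_mem' := fun {a b} ha hb =>
    ⟨show a.x + b.x = 0 by rw [ha.1, hb.1, add_zero],
     show a.y + b.y = 0 by rw [ha.2, hb.2, add_zero]⟩
  one_mem' := ⟨rfl, rfl⟩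
  inv_mem' := fun {a} ha =>
    ⟨show -a.x = 0 by rw [ha.1, neg_zero],
     show -a.y = 0 by rw [ha.2, neg_zero]⟩

/-- `γ_i(α,β) = αβ/2 + (α² − εβ²)i`. -/
def gam {F : Type*} [Field F] (ε i α β : F) : F := α * β / 2 + (α ^ 2 - ε * β ^ 2) * i

/-- `Y_i = {g(α, β, γ_i(α,β)) : (α,β) ≠ (0,0)}`. -/
def Yset {F : Type*} [Field F] (ε i : F) : Set (Heis F) :=
  {g : Heis F | ∃ α β : F, (α, β) ≠ (0, 0) ∧ g = gElt α β (gam ε i α β)}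

/-- `X_i = Y_i ∪ {e}`. -/
def Xset {F : Type*} [Field F] (ε i : F) : Set (Heis F) := Yset ε i ∪ {1}

/-- The map `ρ(M) : G → G` attached to the matrix `M = [[α,β],[εβ,α]]`. -/
def rho {F : Type*} [Field F] (ε α β : F) : Heis F → Heis F := fun g =>
  gElt (α * g.x + ε * β * g.y) (β * g.x + α * g.y)
    (α * β * (g.x ^ 2 / 2 + ε * g.y ^ 2 / 2) + ε * β ^ 2 * g.x * g.y
      + (α ^ 2 - ε * β ^ 2) * g.z)

/-- `K = {ρ(M) : M = [[α,β],[εβ,α]], (α,β) ≠ (0,0)}`, as a set of maps `G → G`. -/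
def Kset {F : Type*} [Field F] (ε : F) : Set (Heis F → Heis F) :=
  {f | ∃ α β : F, (α, β) ≠ (0, 0) ∧ f = rho ε α β}

/-- The family of sets `{e}`, `Z \ {e}`, `Y_i` for `i ∈ F`. -/
def SFam {F : Type*} [Field F] (ε : F) : Set (Set (Heis F)) :=
  insert {1} (insert (Zset F \ {1}) {S | ∃ i : F, S = Yset ε i})

/-- `f` preserves each of the basic sets `{e}`, `Z \ {e}`, `Y_i`:
`hg⁻¹ ∈ S ↔ f(h)f(g)⁻¹ ∈ S`. -/
def Preserves {F : Type*} [Field F] (ε : F) (f : Heis F → Heis F) : Prop :=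
  ∀ S ∈ SFam ε, ∀ g h : Heis F, h * g⁻¹ ∈ S ↔ f h * (f g)⁻¹ ∈ S

/-- The set of permutations of `G` of the form `x ↦ σ(x)·c` with `σ ∈ K`, `c ∈ G`. -/
def Aset {F : Type*} [Field F] (ε : F) : Set (Equiv.Perm (Heis F)) :=
  {f | ∃ σ ∈ Kset ε, ∃ c : Heis F, ∀ x : Heis F, f x = σ x * c}

/-- The operation `ψ` on `F ∪ {∞}`, with `∞` encoded as `none`. -/
def psi {F : Type*} [Field F] [DecidableEq F] (ε : F) : Option F → Option F → Option F
  | none, j => j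
  | some i, none => some i
  | some i, some j => if i + j = 0 then none else some ((i * j + ε / 16) / (i + j))

/-- `Y_k` for `k ∈ F ∪ {∞}`, where `Y_∞ = Z \ {e}`. -/
def YInf {F : Type*} [Field F] (ε : F) : Option F → Set (Heis F)
  | some i => Yset ε i
  | none => Zset F \ {1}

-- AUX
section Aux
variable {F : Type*} [Field F]

lemma heis_one_def : (1 : Heis F) = ⟨0, 0, 0⟩ := rfl

lemma heis_eq_one_iff {g : Heis F} : g = 1 ↔ g.x = 0 ∧ g.y = 0 ∧ g.z = 0 := by
  constructor
  · rintro rfl; exact ⟨rfl, rfl, rfl⟩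
  · rintro ⟨h1, h2, h3⟩; rw [heis_one_def]; ext <;> assumption

lemma eps_ne_zero {ε : F} (hε : ¬IsSquare ε) : ε ≠ 0 := by
  rintro rfl; exact hε ⟨0, by ring⟩

lemma norm_ne_zero {ε : F} (hε : ¬IsSquare ε) {α β : F} (h : (α, β) ≠ (0, 0)) :
    α ^ 2 - ε * β ^ 2 ≠ 0 := by
  intro h0
  by_cases hβ : β = 0
  · subst hβ
    have hα : α = 0 := by
      have h2 : α ^ 2 = 0 := by linear_combination h0
      exact pow_eq_zero_iff (n := 2) (by norm_num) |>.mp h2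
    exact h (by simp [hα])
  · apply hε
    refine ⟨α / β, ?_⟩
    field_simp
    linear_combination -h0

lemma norm_surj [Fintype F] (hodd : Odd (Fintype.card F)) {ε : F} (hε0 : ε ≠ 0) (c : F) :
    ∃ a b : F, a ^ 2 - ε * b ^ 2 = c := by
  obtain ⟨a, b, hab⟩ := FiniteField.exists_root_sum_quadratic
    (f := Polynomial.X ^ 2 - Polynomial.C c) (g := Polynomial.C (-ε) * Polynomial.X ^ 2)
    (Polynomial.degree_X_pow_sub_C (by norm_num) c)
    (Polynomial.degree_C_mul_X_pow 2 (neg_ne_zero.mpr hε0))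
    (Nat.odd_iff.mp hodd)
  simp only [Polynomial.eval_sub, Polynomial.eval_pow, Polynomial.eval_X, Polynomial.eval_C,
    Polynomial.eval_mul] at hab
  exact ⟨a, b, by linear_combination hab⟩

lemma two_ne_zero'' [Fintype F] (hodd : Odd (Fintype.card F)) : (2 : F) ≠ 0 := by
  refine Ring.two_ne_zero (fun h => ?_)
  have h1 := FiniteField.even_card_iff_char_two.mp h
  have h2 := Nat.odd_iff.mp hodd
  omega

lemma mem_Yset_iff {ε i : F} {g : Heis F} :
    g ∈ Yset ε i ↔ (g.x, g.y) ≠ (0, 0) ∧ g.z = gam ε i g.x g.y := by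
  constructor
  · rintro ⟨α, β, hαβ, rfl⟩; exact ⟨hαβ, rfl⟩
  · rintro ⟨h1, h2⟩; exact ⟨g.x, g.y, h1, by ext <;> simp [gElt, h2]⟩

lemma classify {ε : F} (hε : ¬IsSquare ε) (h2 : (2 : F) ≠ 0) {g : Heis F}
    (hxy : (g.x, g.y) ≠ (0, 0)) :
    g ∈ Yset ε ((g.z - g.x * g.y / 2) / (g.x ^ 2 - ε * g.y ^ 2)) := by
  have hd : g.x ^ 2 - ε * g.y ^ 2 ≠ 0 := norm_ne_zero hε hxy
  refine mem_Yset_iff.mpr ⟨hxy, ?_⟩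
  unfold gam
  rw [mul_div_assoc', mul_div_cancel_left₀ _ hd]; ring

lemma rho_mem_Yset {ε i α β : F} (hε : ¬IsSquare ε) (h2 : (2 : F) ≠ 0) (hαβ : (α, β) ≠ (0, 0)) {g : Heis F}
    (hg : g ∈ Yset ε i) : rho ε α β g ∈ Yset ε i := by
  obtain ⟨hxy, hz⟩ := mem_Yset_iff.mp hg
  refine mem_Yset_iff.mpr ⟨?_, ?_⟩
  · intro h
    rw [Prod.mk.injEq] at h
    obtain ⟨h1, h2⟩ := h
    have hd : α ^ 2 - ε * β ^ 2 ≠ 0 := norm_ne_zero hε hαβ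
    have hx : (α ^ 2 - ε * β ^ 2) * g.x = 0 := by
      have : (α ^ 2 - ε * β ^ 2) * g.x
          = α * (α * g.x + ε * β * g.y) - ε * β * (β * g.x + α * g.y) := by ring
      rw [this]
      simp only [rho, gElt] at h1 h2
      rw [h1, h2]; ring
    have hy : (α ^ 2 - ε * β ^ 2) * g.y = 0 := by
      have : (α ^ 2 - ε * β ^ 2) * g.y
          = α * (β * g.x + α * g.y) - β * (α * g.x + ε * β * g.y) := by ring
      rw [this]
      simp only [rho, gElt] at h1 h2
      rw [h1, h2]; ring
    apply hxy
    rw [Prod.mk.injEq]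
    constructor
    · exact (mul_eq_zero.mp hx).resolve_left hd
    · exact (mul_eq_zero.mp hy).resolve_left hd
  · show (rho ε α β g).z = _
    simp only [rho, gElt, gam] at hz ⊢
    field_simp at hz ⊢
    linear_combination (α ^ 2 - ε * β ^ 2) * hz

end Aux

section Orbit
variable {F : Type*} [Field F] [Fintype F]

omit [Fintype F] in
lemma rho_one {ε α β : F} : rho ε α β 1 = 1 := by
  rw [heis_one_def]
  ext <;> simp [rho, gElt]

lemma orbit_one {ε : F} : {y : Heis F | ∃ f ∈ Kset ε, f 1 = y} = {1} := by
  ext h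
  simp only [Set.mem_setOf_eq, Set.mem_singleton_iff, Kset]
  constructor
  · rintro ⟨f, ⟨α, β, hαβ, rfl⟩, rfl⟩
    exact rho_one
  · rintro rfl
    exact ⟨rho ε 1 0, ⟨1, 0, by simp, rfl⟩, rho_one⟩

lemma orbit_center (hodd : Odd (Fintype.card F)) {ε : F} (hε : ¬IsSquare ε) {g : Heis F}
    (hx : g.x = 0) (hy : g.y = 0) (hz : g.z ≠ 0) :
    {y : Heis F | ∃ f ∈ Kset ε, f g = y} = Zset F \ {1} := by
  ext h
  simp only [Set.mem_setOf_eq, Kset, Set.mem_diff, Set.mem_singleton_iff]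
  constructor
  · rintro ⟨f, ⟨α, β, hαβ, rfl⟩, rfl⟩
    have hd := norm_ne_zero hε hαβ
    have hval : rho ε α β g = ⟨0, 0, (α ^ 2 - ε * β ^ 2) * g.z⟩ := by
      ext <;> simp [rho, gElt, hx, hy]
    rw [hval]
    refine ⟨⟨rfl, rfl⟩, ?_⟩
    rw [heis_eq_one_iff]
    rintro ⟨-, -, hz0⟩
    exact mul_ne_zero hd hz hz0
  · rintro ⟨⟨hhx, hhy⟩, hh1⟩
    have hhz : h.z ≠ 0 := fun h0 => hh1 (heis_eq_one_iff.mpr ⟨hhx, hhy, h0⟩)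
    obtain ⟨α, β, hab⟩ := norm_surj hodd (eps_ne_zero hε) (h.z / g.z)
    have hαβ : (α, β) ≠ (0, 0) := by
      rintro hc
      rw [Prod.mk.injEq] at hc
      obtain ⟨rfl, rfl⟩ := hc
      apply hhz
      have : (0 : F) = h.z / g.z := by linear_combination hab
      field_simp at this
      simpa using this.symm
    refine ⟨rho ε α β, ⟨α, β, hαβ, rfl⟩, ?_⟩
    ext
    · show α * g.x + ε * β * g.y = h.x
      rw [hx, hy, hhx]; ring
    · show β * g.x + α * g.y = h.y
      rw [hx, hy, hhy]; ring
    · show α * β * (g.x ^ 2 / 2 + ε * g.y ^ 2 / 2) + ε * β ^ 2 * g.x * g.y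
        + (α ^ 2 - ε * β ^ 2) * g.z = h.z
      rw [hx, hy, hab]
      field_simp
      ring

lemma orbit_Yset (h2 : (2 : F) ≠ 0) {ε : F} (hε : ¬IsSquare ε) {i : F} {g : Heis F}
    (hg : g ∈ Yset ε i) : {y : Heis F | ∃ f ∈ Kset ε, f g = y} = Yset ε i := by
  obtain ⟨hgxy, hgz⟩ := mem_Yset_iff.mp hg
  have hd : g.x ^ 2 - ε * g.y ^ 2 ≠ 0 := norm_ne_zero hε hgxy
  ext h
  simp only [Set.mem_setOf_eq, Kset]
  constructor
  · rintro ⟨f, ⟨α, β, hαβ, rfl⟩, rfl⟩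
    exact rho_mem_Yset hε h2 hαβ hg
  · intro hh
    obtain ⟨hhxy, hhz⟩ := mem_Yset_iff.mp hh
    set α := (g.x * h.x - ε * g.y * h.y) / (g.x ^ 2 - ε * g.y ^ 2) with hα
    set β := (g.x * h.y - g.y * h.x) / (g.x ^ 2 - ε * g.y ^ 2) with hβ
    have h1 : α * g.x + ε * β * g.y = h.x := by
      rw [hα, hβ]; field_simp; ring
    have h2' : β * g.x + α * g.y = h.y := by
      rw [hα, hβ]; rw [div_mul_eq_mul_div, div_mul_eq_mul_div, ← add_div, div_eq_iff hd]; ring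
    have hαβ : (α, β) ≠ (0, 0) := by
      intro hc
      rw [Prod.mk.injEq] at hc
      have hx0 : h.x = 0 := by
        rw [hc.1, hc.2] at h1; simpa using h1.symm
      have hy0 : h.y = 0 := by
        rw [hc.1, hc.2] at h2'; simpa using h2'.symm
      exact hhxy (by rw [hx0, hy0])
    refine ⟨rho ε α β, ⟨α, β, hαβ, rfl⟩, ?_⟩
    have hr := rho_mem_Yset hε h2 hαβ hg
    obtain ⟨-, hrz⟩ := mem_Yset_iff.mp hr
    have hrx : (rho ε α β g).x = h.x := h1
    have hry : (rho ε α β g).y = h.y := h2'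
    ext
    · exact hrx
    · exact hry
    · rw [hrz, hrx, hry]; exact hhz.symm

end Orbit

section Main
variable {F : Type*} [Field F]

lemma one_not_mem_Yset {ε i : F} : (1 : Heis F) ∉ Yset ε i := by
  intro h
  obtain ⟨h1, -⟩ := mem_Yset_iff.mp h
  exact h1 (by rw [heis_one_def])

lemma Yset_index_eq {ε i j : F} (hε : ¬IsSquare ε) {a : Heis F}
    (ha : a ∈ Yset ε i) (hb : a ∈ Yset ε j) : i = j := by
  obtain ⟨hxy, h1⟩ := mem_Yset_iff.mp ha
  obtain ⟨-, h2⟩ := mem_Yset_iff.mp hb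
  have hd := norm_ne_zero hε hxy
  have hmul : (a.x ^ 2 - ε * a.y ^ 2) * (i - j) = 0 := by
    unfold gam at h1 h2
    linear_combination h2 - h1
  rcases mul_eq_zero.mp hmul with h | h
  · exact absurd h hd
  · exact sub_eq_zero.mp h

end Main

/-- The orbits of `K` acting naturally on `G` are exactly the sets
`{e}`, `Z \ {e}` and `Y_i` for `i ∈ F_q`; in particular these sets are pairwise
disjoint and partition `G`. -/
theorem statement_1 {F : Type*} [Field F] [Fintype F]
    (hodd : Odd (Fintype.card F)) (ε : F) (hε : ¬IsSquare ε) :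
    {S : Set (Heis F) | ∃ g : Heis F, S = {y : Heis F | ∃ f ∈ Kset ε, f g = y}} = SFam ε ∧
    (SFam ε).PairwiseDisjoint id ∧
    ⋃₀ SFam ε = Set.univ := by
  have h2 : (2 : F) ≠ 0 := two_ne_zero'' hodd
  refine ⟨?_, ?_, ?_⟩
  · ext S
    simp only [Set.mem_setOf_eq, SFam, Set.mem_insert_iff]
    constructor
    · rintro ⟨g, rfl⟩
      by_cases hx : g.x = 0
      · by_cases hy : g.y = 0
        · by_cases hz : g.z = 0
          · left
            have hg1 : g = 1 := heis_eq_one_iff.mpr ⟨hx, hy, hz⟩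
            rw [hg1, orbit_one]
          · right; left
            exact (orbit_center hodd hε hx hy hz).symm ▸ rfl
        · right; right
          have hxy : (g.x, g.y) ≠ (0, 0) := by simp [Prod.ext_iff, hy]
          exact ⟨_, (orbit_Yset h2 hε (classify hε h2 hxy))⟩
      · right; right
        have hxy : (g.x, g.y) ≠ (0, 0) := by simp [Prod.ext_iff, hx]
        exact ⟨_, (orbit_Yset h2 hε (classify hε h2 hxy))⟩
    · rintro (rfl | rfl | ⟨i, rfl⟩)
      · exact ⟨1, orbit_one.symm⟩
      · exact ⟨gElt 0 0 1, (orbit_center hodd hε rfl rfl one_ne_zero).symm⟩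
      · have hg : gElt 1 0 i ∈ Yset ε i := by
          refine ⟨1, 0, by simp, ?_⟩
          unfold gElt gam
          ext <;> simp
        exact ⟨gElt 1 0 i, (orbit_Yset h2 hε hg).symm⟩
  · intro S hS T hT hST
    simp only [SFam, Set.mem_insert_iff, Set.mem_setOf_eq] at hS hT
    simp only [Function.onFun, id_eq]
    rw [Set.disjoint_left]
    obtain rfl | rfl | ⟨i, rfl⟩ := hS <;> obtain rfl | rfl | ⟨j, rfl⟩ := hT
    · exact absurd rfl hST
    · intro a ha hb
      rw [Set.mem_singleton_iff] at ha
      exact hb.2 ha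
    · intro a ha hb
      rw [Set.mem_singleton_iff] at ha
      exact one_not_mem_Yset (ha ▸ hb)
    · intro a ha hb
      rw [Set.mem_singleton_iff] at hb
      exact ha.2 hb
    · exact absurd rfl hST
    · intro a ha hb
      exact (mem_Yset_iff.mp hb).1 (by rw [ha.1.1, ha.1.2])
    · intro a ha hb
      rw [Set.mem_singleton_iff] at hb
      exact one_not_mem_Yset (hb ▸ ha)
    · intro a ha hb
      exact (mem_Yset_iff.mp ha).1 (by rw [hb.1.1, hb.1.2])
    · intro a ha hb
      exact hST (by rw [Yset_index_eq hε ha hb])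
  · apply Set.eq_univ_of_forall
    intro g
    rw [Set.mem_sUnion]
    by_cases hx : g.x = 0
    · by_cases hy : g.y = 0
      · by_cases hz : g.z = 0
        · exact ⟨{1}, by simp [SFam], heis_eq_one_iff.mpr ⟨hx, hy, hz⟩⟩
        · exact ⟨Zset F \ {1}, by simp [SFam],
            ⟨⟨hx, hy⟩, fun h1 => hz (heis_eq_one_iff.mp h1).2.2⟩⟩
      · have hxy : (g.x, g.y) ≠ (0, 0) := by simp [Prod.ext_iff, hy]
        exact ⟨Yset ε _, by
          simp only [SFam, Set.mem_insert_iff, Set.mem_setOf_eq]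
          exact Or.inr (Or.inr ⟨_, rfl⟩), classify hε h2 hxy⟩
    · have hxy : (g.x, g.y) ≠ (0, 0) := by simp [Prod.ext_iff, hx]
      exact ⟨Yset ε _, by
        simp only [SFam, Set.mem_insert_iff, Set.mem_setOf_eq]
        exact Or.inr (Or.inr ⟨_, rfl⟩), classify hε h2 hxy⟩
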